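/- Let Y be a DPP on {1,…,N} with kernel K, and let A, B be disjoint subsets such that det((I−K)_B) ≠ 0. Then ℙ(A ⊆ Y, B ∩ Y = ∅) = det((I−K)_B) · det(H^B_A), where H^B = K + K_{·×B}((I−K)_B)^{-1} K_{B×·}. -/

import Mathlib

/-- The principal submatrix of `K` indexed by a finite subset `A`. -/
noncomputable def subMat {N : ℕ} (K : Matrix (Fin N) (Fin N) ℝ) (A : Finset (Fin N)) :
    Matrix A A ℝ :=
  K.submatrix (fun i : A => (i : Fin N)) (fun j : A => (j : Fin N))

/-- The matrix `H^B = K + K_{·×B} ((I−K)_B)⁻¹ K_{B×·}`. -/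
noncomputable def HB {N : ℕ} (K : Matrix (Fin N) (Fin N) ℝ) (B : Finset (Fin N)) :
    Matrix (Fin N) (Fin N) ℝ :=
  K + (K.submatrix id (fun j : B => (j : Fin N))) *
        (subMat ((1 : Matrix (Fin N) (Fin N) ℝ) - K) B)⁻¹ *
        (K.submatrix (fun i : B => (i : Fin N)) id)

/-- `ℙ(A ⊆ Y, B ∩ Y = ∅)` for a point process with distribution `P`. -/
noncomputable def jointProb {N : ℕ} (P : Finset (Fin N) → ℝ) (A B : Finset (Fin N)) : ℝ :=
  ∑ C ∈ Finset.univ.filter (fun C => A ⊆ C ∧ Disjoint B C), P C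


section Aux
open Matrix Finset
set_option linter.unusedSectionVars false
variable {n R : Type*} [Fintype n] [DecidableEq n] [CommRing R]


/-- Determinant of a submatrix depends only on the range of the (injective) index map. -/
lemma det_submatrix_eq_of_range {m m' : Type*} [Fintype m] [DecidableEq m]
    [Fintype m'] [DecidableEq m'] (K : Matrix n n R)
    (g1 : m → n) (g2 : m' → n) (h1 : Function.Injective g1) (h2 : Function.Injective g2)
    (hr : Set.range g1 = Set.range g2) :
    (K.submatrix g1 g1).det = (K.submatrix g2 g2).det := by
  let e : m ≃ m' :=
    (Equiv.ofInjective g1 h1).trans ((Equiv.setCongr hr).trans (Equiv.ofInjective g2 h2).symm)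
  have hg : ∀ x, g2 (e x) = g1 x := by
    intro x
    show g2 ((Equiv.ofInjective g2 h2).symm (Equiv.setCongr hr ⟨g1 x, Set.mem_range_self x⟩)) = _
    rw [Equiv.apply_ofInjective_symm h2]
    rfl
  rw [← Matrix.det_submatrix_equiv_self e (K.submatrix g2 g2)]
  congr 1
  ext i j
  simp [hg]

/-- Multilinearity of the determinant in a set of rows. -/
lemma det_rows_add (u v : n → n → R) (E : Finset n) :
    ∀ w : n → n → R,
    Matrix.det (Matrix.of fun i j => if i ∈ E then u i j + v i j else w i j) =
      ∑ T ∈ E.powerset, Matrix.det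
        (Matrix.of fun i j => if i ∈ E then (if i ∈ T then u i j else v i j) else w i j) := by
  induction E using Finset.induction_on with
  | empty => intro w; simp
  | @insert a E ha ih =>
    intro w
    have key : (Matrix.of fun i j => if i ∈ insert a E then u i j + v i j else w i j) =
        Matrix.updateRow (Matrix.of fun i j => if i ∈ E then u i j + v i j else w i j) a
          (u a + v a) := by
      ext i j
      by_cases hia : i = a
      · subst hia; simp [ha]
      · simp [Matrix.updateRow_ne hia, Finset.mem_insert, hia]
    rw [key, Matrix.det_updateRow_add]

    have e1 : Matrix.updateRow (Matrix.of fun i j => if i ∈ E then u i j + v i j else w i j) a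
          (u a) = Matrix.of fun i j => if i ∈ E then u i j + v i j else
            (if i = a then u i j else w i j) := by
      ext i j
      by_cases hia : i = a
      · subst hia; simp [ha]
      · simp [Matrix.updateRow_ne hia, hia]
    have e2 : Matrix.updateRow (Matrix.of fun i j => if i ∈ E then u i j + v i j else w i j) a
          (v a) = Matrix.of fun i j => if i ∈ E then u i j + v i j else
            (if i = a then v i j else w i j) := by
      ext i j
      by_cases hia : i = a
      · subst hia; simp [ha]
      · simp [Matrix.updateRow_ne hia, hia]
    rw [e1, e2, ih, ih, Finset.sum_powerset_insert ha]
    conv_rhs => rw [add_comm]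
    congr 1
    · -- terms with a ∈ T
      apply Finset.sum_congr rfl
      intro T hT
      rw [Finset.mem_powerset] at hT
      congr 1
      ext i j
      by_cases hia : i = a
      · subst hia; simp [ha, Finset.mem_insert]
      · by_cases hiE : i ∈ E
        · simp [hiE, Finset.mem_insert, hia, Finset.mem_insert (s := T)]
        · simp [hiE, Finset.mem_insert, hia]
    · -- terms with a ∉ T
      apply Finset.sum_congr rfl
      intro T hT
      rw [Finset.mem_powerset] at hT
      have haT : a ∉ T := fun h => ha (hT h)
      congr 1
      ext i j
      by_cases hia : i = a
      · subst hia; simp [ha, haT]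
      · by_cases hiE : i ∈ E
        · simp [hiE, Finset.mem_insert, hia]
        · simp [hiE, Finset.mem_insert, hia]

/-- Negating a set of rows multiplies the determinant by `(-1)^card`. -/
lemma det_neg_rows (M : Matrix n n R) (F : Finset n) :
    Matrix.det (Matrix.of fun i j => if i ∈ F then -M i j else M i j) =
      (-1) ^ F.card * M.det := by
  induction F using Finset.induction_on with
  | empty => simp; rfl
  | @insert a F ha ih =>
    have key : (Matrix.of fun i j => if i ∈ insert a F then -M i j else M i j) =
        Matrix.updateRow (Matrix.of fun i j => if i ∈ F then -M i j else M i j) a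
          ((-1 : R) • M a) := by
      ext i j
      by_cases hia : i = a
      · subst hia; simp [ha]
      · simp [Matrix.updateRow_ne hia, Finset.mem_insert, hia]
    rw [key, Matrix.det_updateRow_smul]
    have e3 : Matrix.updateRow (Matrix.of fun i j => if i ∈ F then -M i j else M i j) a (M a) =
        Matrix.of fun i j => if i ∈ F then -M i j else M i j := by
      ext i j
      by_cases hia : i = a
      · subst hia; simp [ha]
      · simp [Matrix.updateRow_ne hia]
    rw [e3, ih, Finset.card_insert_of_notMem ha, pow_succ]
    ring


/-- If the rows of `M` indexed by `T` are standard basis rows, the determinant reduces to the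
principal minor on the complement of `T`. -/
lemma det_eq_det_compl (M : Matrix n n R) (T : Finset n)
    (h : ∀ i ∈ T, ∀ j, M i j = if j = i then 1 else 0) :
    M.det = (M.submatrix (fun i : {x // x ∉ T} => (i : n)) (fun j : {x // x ∉ T} => (j : n))).det := by
  classical
  let e : {x // x ∈ T} ⊕ {x // ¬ x ∈ T} ≃ n := Equiv.sumCompl (fun x => x ∈ T)
  have hM : M.submatrix e e = Matrix.fromBlocks 1 0
      (M.submatrix (fun i : {x // ¬ x ∈ T} => (i : n)) (fun j : {x // x ∈ T} => (j : n)))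
      (M.submatrix (fun i : {x // ¬ x ∈ T} => (i : n)) (fun j : {x // ¬ x ∈ T} => (j : n))) := by
    ext i j
    cases i with
    | inl t =>
      cases j with
      | inl t' =>
        simp only [Matrix.submatrix_apply, Matrix.fromBlocks_apply₁₁, e,
          Equiv.sumCompl_apply_inl]
        rw [h _ t.2, Matrix.one_apply]
        by_cases htt : t = t'
        · subst htt; simp
        · have htt' : (t' : n) ≠ (t : n) := fun h' => htt (Subtype.ext h'.symm)
          simp [htt, htt']
      | inr c =>
        simp only [Matrix.submatrix_apply, Matrix.fromBlocks_apply₁₂, e,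
          Equiv.sumCompl_apply_inl, Equiv.sumCompl_apply_inr]
        rw [h _ t.2]
        have : (c : n) ≠ (t : n) := fun hc => c.2 (hc ▸ t.2)
        simp [this]
    | inr c =>
      cases j with
      | inl t' =>
        simp [e, Equiv.sumCompl_apply_inl, Equiv.sumCompl_apply_inr]
      | inr c' =>
        simp [e, Equiv.sumCompl_apply_inl, Equiv.sumCompl_apply_inr]
  rw [← Matrix.det_submatrix_equiv_self e M, hM, Matrix.det_fromBlocks_zero₁₂]
  simp

end Aux

open Matrix Finset

lemma key_det {N : ℕ} (K : Matrix (Fin N) (Fin N) ℝ) (A B : Finset (Fin N))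
    (hAB : Disjoint A B) :
    (Matrix.fromBlocks (subMat K A)
      (K.submatrix (fun i : A => (i : Fin N)) (fun j : B => (j : Fin N)))
      (-(K.submatrix (fun i : B => (i : Fin N)) (fun j : A => (j : Fin N))))
      (subMat ((1 : Matrix (Fin N) (Fin N) ℝ) - K) B)).det =
    ∑ S ∈ B.powerset, (-1 : ℝ) ^ S.card * (subMat K (A ∪ S)).det := by
  classical
  set J := ({x // x ∈ A} ⊕ {x // x ∈ B}) with hJ
  let f : J → Fin N := Sum.elim (fun a => (a : Fin N)) (fun b => (b : Fin N))
  have hfl : ∀ a : {x // x ∈ A}, f (Sum.inl a) = (a : Fin N) := fun _ => rfl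
  have hfr : ∀ b : {x // x ∈ B}, f (Sum.inr b) = (b : Fin N) := fun _ => rfl
  have hf : Function.Injective f := by
    rintro (a | b) (a' | b') hij
    · exact congrArg Sum.inl (Subtype.ext hij)
    · rw [hfl, hfr] at hij
      have : (a : Fin N) ∈ B := by rw [hij]; exact b'.2
      exact absurd this (Finset.disjoint_left.mp hAB a.2)
    · rw [hfr, hfl] at hij
      have : (a' : Fin N) ∈ B := by rw [← hij]; exact b.2
      exact absurd this (Finset.disjoint_left.mp hAB a'.2)
    · exact congrArg Sum.inr (Subtype.ext hij)
  let E : Finset J := Finset.univ.filter (fun i => i.isRight)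
  have hEl : ∀ a : {x // x ∈ A}, (Sum.inl a : J) ∉ E := by simp [E]
  have hEr : ∀ b : {x // x ∈ B}, (Sum.inr b : J) ∈ E := by simp [E]
  have hEelt : ∀ i ∈ E, ∃ b : {x // x ∈ B}, i = Sum.inr b := by
    rintro (a | b) hi
    · exact absurd hi (hEl a)
    · exact ⟨b, rfl⟩
  -- image membership criterion
  have himgmem : ∀ (T : Finset J) (b : {x // x ∈ B}),
      (b : Fin N) ∈ T.image f ↔ Sum.inr b ∈ T := by
    intro T b
    constructor
    · intro h
      obtain ⟨t, ht, hft⟩ := Finset.mem_image.mp h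
      have : t = Sum.inr b := hf (by rw [hft, hfr])
      rwa [this] at ht
    · intro h
      exact Finset.mem_image.mpr ⟨_, h, hfr b⟩
  let u : J → J → ℝ := fun i j => if j = i then 1 else 0
  let v : J → J → ℝ := fun i j => -K (f i) (f j)
  let w : J → J → ℝ := fun i j => K (f i) (f j)
  have hblock : (Matrix.fromBlocks (subMat K A)
      (K.submatrix (fun i : A => (i : Fin N)) (fun j : B => (j : Fin N)))
      (-(K.submatrix (fun i : B => (i : Fin N)) (fun j : A => (j : Fin N))))
      (subMat ((1 : Matrix (Fin N) (Fin N) ℝ) - K) B)) =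
      Matrix.of (fun i j => if i ∈ E then u i j + v i j else w i j) := by
    ext i j
    rcases i with a | b <;> rcases j with a' | b'
    · simp [hEl, subMat, w, hfl]
    · simp [hEl, w, hfl, hfr]
    · simp only [Matrix.fromBlocks_apply₂₁, Matrix.of_apply, hEr, if_true, u, v]
      simp [hfr, hfl]
    · simp only [Matrix.fromBlocks_apply₂₂, Matrix.of_apply, hEr, if_true, u, v, subMat,
        Matrix.submatrix_apply, Matrix.sub_apply, Matrix.one_apply, hfr]
      by_cases hbe : (b : Fin N) = (b' : Fin N)
      · have hb : b' = b := Subtype.ext hbe.symm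
        simp [hbe, hb]
        ring
      · have hb : Sum.inr b' ≠ (Sum.inr b : J) := by
          intro h
          injection h with h'
          exact hbe (by rw [h'])
        simp [hbe, hb]
  rw [hblock, det_rows_add u v E w]
  refine Finset.sum_nbij' (fun T => B \ T.image f)
    (fun S => E.filter (fun x => f x ∉ S)) ?_ ?_ ?_ ?_ ?_
  · intro T _
    exact Finset.mem_powerset.mpr (Finset.sdiff_subset)
  · intro S _
    exact Finset.mem_powerset.mpr (Finset.filter_subset _ _)
  · -- left inverse
    intro T hT
    rw [Finset.mem_powerset] at hT
    ext i
    rcases i with a | b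
    · simp only [Finset.mem_filter]
      constructor
      · rintro ⟨hi, -⟩; exact absurd hi (hEl a)
      · intro hi; exact absurd (hT hi) (hEl a)
    · simp only [Finset.mem_filter, hEr, true_and, Finset.mem_sdiff, hfr, not_and, not_not]
      constructor
      · intro h
        exact (himgmem T b).mp (h b.2)
      · intro h _
        exact (himgmem T b).mpr h
  · -- right inverse
    intro S hS
    rw [Finset.mem_powerset] at hS
    ext x
    simp only [Finset.mem_sdiff, Finset.mem_image]
    constructor
    · rintro ⟨hxB, hx⟩
      by_contra hxS
      exact hx ⟨Sum.inr ⟨x, hxB⟩, Finset.mem_filter.mpr ⟨hEr _, by simpa [hfr] using hxS⟩, rfl⟩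
    · intro hxS
      refine ⟨hS hxS, ?_⟩
      rintro ⟨i, hi, rfl⟩
      have := (Finset.mem_filter.mp hi).2
      exact this hxS
  · -- per term equality
    intro T hT
    rw [Finset.mem_powerset] at hT
    set S := B \ T.image f with hSdef
    -- Step A: extract signs
    set Q : Matrix J J ℝ := Matrix.of (fun i j => if i ∈ T then u i j else w i j) with hQ
    have hstepA : (Matrix.of fun i j => if i ∈ E then (if i ∈ T then u i j else v i j)
        else w i j) = Matrix.of (fun i j => if i ∈ E \ T then -Q i j else Q i j) := by
      ext i j
      by_cases hiT : i ∈ T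
      · simp [Finset.mem_sdiff, hiT, hT hiT, Q]
      · by_cases hiE : i ∈ E
        · simp [Finset.mem_sdiff, hiT, hiE, Q, v, w]
        · simp [Finset.mem_sdiff, hiT, hiE, Q]
    rw [hstepA, det_neg_rows Q (E \ T)]
    -- Step E: cardinality
    have hcard : (E \ T).card = S.card := by
      have himg : (E \ T).image f = S := by
        ext x
        simp only [Finset.mem_image, hSdef, Finset.mem_sdiff]
        constructor
        · rintro ⟨i, hi, rfl⟩
          obtain ⟨hiE, hiT⟩ := hi
          obtain ⟨b, rfl⟩ := hEelt i hiE
          rw [hfr]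
          exact ⟨b.2, fun hb => hiT ((himgmem T b).mp (Finset.mem_image.mpr hb))⟩
        · rintro ⟨hxB, hx⟩
          refine ⟨Sum.inr ⟨x, hxB⟩, ⟨hEr _, ?_⟩, rfl⟩
          intro hmem
          exact hx ⟨_, hmem, rfl⟩
      rw [← himg, Finset.card_image_of_injective _ hf]
    rw [hcard]
    congr 1
    -- Step B: reduce to complement minor
    have hrows : ∀ i ∈ T, ∀ j, Q i j = if j = i then 1 else 0 := by
      intro i hi j
      simp [Q, hi, u]
    rw [det_eq_det_compl Q T hrows]
    -- Step C: the minor is a submatrix of K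
    have hsub : (Q.submatrix (fun i : {x // x ∉ T} => (i : J))
        (fun j : {x // x ∉ T} => (j : J))) =
        K.submatrix (fun i : {x // x ∉ T} => f i) (fun j : {x // x ∉ T} => f j) := by
      ext i j
      simp [Q, i.2, w]
    rw [hsub]
    -- Step D: identify with subMat K (A ∪ S)
    refine det_submatrix_eq_of_range K _ _
      (fun i j hij => Subtype.ext (hf hij))
      (fun i j hij => Subtype.ext hij) ?_
    ext x
    simp only [Set.mem_range, Subtype.range_coe_subtype, Set.mem_setOf_eq,
      Finset.mem_union, Finset.mem_coe]
    constructor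
    · rintro ⟨⟨i, hi⟩, rfl⟩
      rcases i with a | b
      · exact Or.inl a.2
      · refine Or.inr ?_
        rw [hfr, Finset.mem_sdiff]
        exact ⟨b.2, fun hb => hi ((himgmem T b).mp hb)⟩
    · rintro (hx | hx)
      · exact ⟨⟨Sum.inl ⟨x, hx⟩, fun h => hEl _ (hT h)⟩, rfl⟩
      · obtain ⟨hxB, hxi⟩ := Finset.mem_sdiff.mp hx
        exact ⟨⟨Sum.inr ⟨x, hxB⟩, fun h => hxi (Finset.mem_image.mpr ⟨_, h, rfl⟩)⟩, rfl⟩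

lemma incl_excl {N : ℕ} (K : Matrix (Fin N) (Fin N) ℝ) (P : Finset (Fin N) → ℝ)
    (hP : ∀ A : Finset (Fin N),
      ∑ B ∈ Finset.univ.filter (fun B => A ⊆ B), P B = (subMat K A).det)
    (A B : Finset (Fin N)) :
    jointProb P A B = ∑ S ∈ B.powerset, (-1 : ℝ) ^ S.card * (subMat K (A ∪ S)).det := by
  classical
  have h1 : ∀ S : Finset (Fin N), (subMat K (A ∪ S)).det =
      ∑ C ∈ Finset.univ.filter (fun C => A ∪ S ⊆ C), P C := fun S => (hP (A ∪ S)).symm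
  simp only [h1, Finset.mul_sum, Finset.sum_filter]
  rw [Finset.sum_comm]
  unfold jointProb
  rw [Finset.sum_filter]
  apply Finset.sum_congr rfl
  intro C _
  by_cases hAC : A ⊆ C
  · have hiff : ∀ S : Finset (Fin N), (A ∪ S ⊆ C) ↔ S ⊆ C := by
      intro S; rw [Finset.union_subset_iff]; simp [hAC]
    simp only [hiff, mul_ite, mul_zero]
    rw [← Finset.sum_filter]
    have hps : B.powerset.filter (fun S => S ⊆ C) = (B ∩ C).powerset := by
      ext S
      simp only [Finset.mem_filter, Finset.mem_powerset, Finset.subset_inter_iff]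
    rw [hps, ← Finset.sum_mul]
    have hsum : (∑ S ∈ (B ∩ C).powerset, (-1 : ℝ) ^ S.card) =
        if B ∩ C = ∅ then 1 else 0 := by
      have := Finset.sum_powerset_neg_one_pow_card (x := B ∩ C)
      have h2 : ((∑ m ∈ (B ∩ C).powerset, (-1 : ℤ) ^ m.card : ℤ) : ℝ) =
          ∑ S ∈ (B ∩ C).powerset, (-1 : ℝ) ^ S.card := by push_cast; rfl
      rw [← h2, this]
      split <;> norm_num
    rw [hsum]
    by_cases hd : Disjoint B C
    · simp [hAC, hd, Finset.disjoint_iff_inter_eq_empty.mp hd]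
    · have hne : B ∩ C ≠ ∅ := fun h => hd (Finset.disjoint_iff_inter_eq_empty.mpr h)
      simp [hAC, hd, hne]
  · have hnot : ∀ S : Finset (Fin N), ¬ (A ∪ S ⊆ C) := fun S h =>
      hAC (Finset.Subset.trans Finset.subset_union_left h)
    simp [hnot, hAC]

lemma schur_step {N : ℕ} (K : Matrix (Fin N) (Fin N) ℝ) (A B : Finset (Fin N))
    (hdet : (subMat ((1 : Matrix (Fin N) (Fin N) ℝ) - K) B).det ≠ 0) :
    (Matrix.fromBlocks (subMat K A)
      (K.submatrix (fun i : A => (i : Fin N)) (fun j : B => (j : Fin N)))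
      (-(K.submatrix (fun i : B => (i : Fin N)) (fun j : A => (j : Fin N))))
      (subMat ((1 : Matrix (Fin N) (Fin N) ℝ) - K) B)).det =
    (subMat ((1 : Matrix (Fin N) (Fin N) ℝ) - K) B).det * (subMat (HB K B) A).det := by
  haveI : Invertible (subMat ((1 : Matrix (Fin N) (Fin N) ℝ) - K) B) :=
    (subMat _ B).invertibleOfIsUnitDet (Ne.isUnit hdet)
  rw [Matrix.det_fromBlocks₂₂, Matrix.invOf_eq_nonsing_inv]
  congr 1
  congr 1
  ext i j
  simp only [Matrix.sub_apply, Matrix.add_apply, Matrix.neg_apply, Matrix.mul_apply,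
    subMat, HB, Matrix.submatrix_apply, id_eq, Finset.sum_mul, Finset.mul_sum,
    mul_neg, neg_mul, Finset.sum_neg_distrib]
  ring_nf

/-- General marginal of a DPP: if `A, B` are disjoint and `det((I−K)_B) ≠ 0`, then
`ℙ(A ⊆ Y, B ∩ Y = ∅) = det((I−K)_B) · det(H^B_A)`. -/
theorem dpp_general_marginal {N : ℕ} (K : Matrix (Fin N) (Fin N) ℝ)
    (hK : K.PosSemidef) (hIK : ((1 : Matrix (Fin N) (Fin N) ℝ) - K).PosSemidef)
    (P : Finset (Fin N) → ℝ)
    (hP : ∀ A : Finset (Fin N),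
      ∑ B ∈ Finset.univ.filter (fun B => A ⊆ B), P B = (subMat K A).det)
    (A B : Finset (Fin N)) (hAB : Disjoint A B)
    (hdet : (subMat ((1 : Matrix (Fin N) (Fin N) ℝ) - K) B).det ≠ 0) :
    jointProb P A B =
      (subMat ((1 : Matrix (Fin N) (Fin N) ℝ) - K) B).det * (subMat (HB K B) A).det := by
  rw [incl_excl K P hP A B, ← key_det K A B hAB, schur_step K A B hdet]
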